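/- Let X be a Banach space, P a bounded projection on X with Q = I − P, and J a two-sided ideal of B(X) with C₀(X) ⊆ J ⊆ C_∞(X). If A ∈ B(X) is invertible, P A Q ∈ J, and the compression P A P restricted to the range of P is a Fredholm operator on PX, then P A⁻¹ Q ∈ J. -/

import Mathlib

section Aux


open Metric Filter Topology ContinuousLinearMap

variable {X : Type*} [NormedAddCommGroup X] [NormedSpace ℂ X] [CompleteSpace X]

/-- The kernel of `1 + K` is finite dimensional for `K` compact. -/
theorem ker_fd_aux (K : X →L[ℂ] X) (hK : IsCompactOperator K) :
    FiniteDimensional ℂ (LinearMap.ker ((1 + K : X →L[ℂ] X) : X →ₗ[ℂ] X)) := by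
  set T : X →L[ℂ] X := 1 + K with hT
  set N := LinearMap.ker (T : X →ₗ[ℂ] X) with hNdef
  have hNclosed : IsClosed ((N : Submodule ℂ X) : Set X) := isClosed_ker T
  obtain ⟨C, hC, hCim⟩ := hK.image_closedBall_subset_compact 1
  apply FiniteDimensional.of_isCompact_closedBall₀ (𝕜 := ℂ) (r := 1) one_pos
  have hE : IsCompact ((Neg.neg '' C) ∩ (closedBall (0 : X) 1 ∩ N)) :=
    (hC.image continuous_neg).inter_right (Metric.isClosed_closedBall.inter hNclosed)
  have heq : closedBall (0 : N) 1 =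
      (Subtype.val : N → X) ⁻¹' ((Neg.neg '' C) ∩ (closedBall (0 : X) 1 ∩ N)) := by
    ext x
    simp only [Set.mem_preimage, Set.mem_inter_iff, mem_closedBall_zero_iff, SetLike.mem_coe]
    constructor
    · intro hx
      have hxball : ‖(x : X)‖ ≤ 1 := hx
      have hsum : (x : X) + K (x : X) = 0 := by
        have h0 : (x : X) ∈ LinearMap.ker (T : X →ₗ[ℂ] X) := x.2
        rw [LinearMap.mem_ker, ContinuousLinearMap.coe_coe, hT, ContinuousLinearMap.add_apply,
          ContinuousLinearMap.one_apply] at h0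
        exact h0
      have hxeq : (x : X) = -(K (x : X)) := eq_neg_of_add_eq_zero_left hsum
      refine ⟨⟨K (x : X), hCim ⟨(x : X), by simpa [mem_closedBall_zero_iff] using hxball, rfl⟩,
        hxeq.symm⟩, hxball, x.2⟩
    · intro hx
      exact hx.2.1
  rw [heq]
  exact hNclosed.isClosedEmbedding_subtypeVal.isCompact_preimage hE

set_option maxHeartbeats 1000000 in
/-- Riesz theory: a compact perturbation of the identity has a left parametrix with
finite-rank remainder. -/
theorem exists_parametrix (K : X →L[ℂ] X) (hK : IsCompactOperator K) :
    ∃ S F : X →L[ℂ] X, FiniteDimensional ℂ (LinearMap.range (F : X →ₗ[ℂ] X)) ∧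
      S ∘L (1 + K) = 1 + F := by
  set T : X →L[ℂ] X := 1 + K with hT
  have hTapp : ∀ x : X, T x = x + K x := fun x => by
    rw [hT, ContinuousLinearMap.add_apply, ContinuousLinearMap.one_apply]
  set N := LinearMap.ker (T : X →ₗ[ℂ] X) with hNdef
  haveI hNfd : FiniteDimensional ℂ N := ker_fd_aux K hK
  obtain ⟨M, hMclosed, hcompl⟩ :=
    (Submodule.ClosedComplemented.of_finiteDimensional N).exists_isClosed_isCompl
  haveI : CompleteSpace M := hMclosed.completeSpace_coe
  obtain ⟨C, hC, hCim⟩ := hK.image_closedBall_subset_compact 1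
  -- T is bounded below on M
  have hbb : ∃ c : ℝ, 0 < c ∧ ∀ x ∈ M, c * ‖x‖ ≤ ‖T x‖ := by
    by_contra h
    push_neg at h
    have hu : ∀ n : ℕ, ∃ x : X, x ∈ M ∧ ‖x‖ = 1 ∧ ‖T x‖ < 1 / (n + 1) := by
      intro n
      obtain ⟨x, hxM, hx⟩ := h (1 / (n + 1)) (by positivity)
      have hx0 : x ≠ 0 := by
        rintro rfl
        simp only [norm_zero, mul_zero, map_zero] at hx
        exact absurd hx (lt_irrefl 0)
      have hxn : (0 : ℝ) < ‖x‖ := norm_pos_iff.2 hx0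
      have hnc : ‖((‖x‖ : ℂ))⁻¹‖ = ‖x‖⁻¹ := by
        rw [norm_inv, Complex.norm_real, Real.norm_eq_abs, abs_of_pos hxn]
      refine ⟨((‖x‖ : ℂ))⁻¹ • x, M.smul_mem _ hxM, ?_, ?_⟩
      · rw [norm_smul, hnc, inv_mul_cancel₀ hxn.ne']
      · rw [map_smul, norm_smul, hnc]
        calc ‖x‖⁻¹ * ‖T x‖ < ‖x‖⁻¹ * (1 / (n + 1) * ‖x‖) := by
              exact (mul_lt_mul_iff_right₀ (inv_pos.2 hxn)).2 hx
          _ = 1 / (n + 1) := by field_simp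
    choose u huM hu1 huT using hu
    have hmem : ∀ n, K (u n) ∈ C :=
      fun n => hCim ⟨u n, by simp [mem_closedBall_zero_iff, hu1 n], rfl⟩
    obtain ⟨y, -, φ, hφ, hconv⟩ := hC.tendsto_subseq hmem
    have hTu : Tendsto (fun n => T (u (φ n))) atTop (𝓝 0) := by
      rw [tendsto_iff_norm_sub_tendsto_zero]
      apply squeeze_zero (fun n => norm_nonneg _) (fun n => ?_)
        (g := fun n : ℕ => 1 / (n + 1))
      · exact tendsto_one_div_add_atTop_nhds_zero_nat
      · rw [sub_zero]
        refine (huT (φ n)).le.trans ?_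
        have h3 : n ≤ φ n := hφ.le_apply
        have : (n : ℝ) + 1 ≤ (φ n : ℝ) + 1 := by
          have := (Nat.cast_le (α := ℝ)).2 h3; linarith
        exact one_div_le_one_div_of_le (by positivity) this
    have hulim : Tendsto (fun n => u (φ n)) atTop (𝓝 (-y)) := by
      have heq : ∀ n, u (φ n) = T (u (φ n)) - K (u (φ n)) := fun n => by
        rw [hTapp]; abel
      simp only [funext heq]
      simpa using hTu.sub hconv
    have hyM : -y ∈ M :=
      hMclosed.mem_of_tendsto hulim (Eventually.of_forall fun n => huM _)
    have hy1 : ‖-y‖ = 1 := by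
      have h1 : Tendsto (fun n => ‖u (φ n)‖) atTop (𝓝 ‖-y‖) := hulim.norm
      have h2 : Tendsto (fun n => ‖u (φ n)‖) atTop (𝓝 1) := by
        simpa [hu1] using tendsto_const_nhds (x := (1 : ℝ)) (f := atTop (α := ℕ))
      exact tendsto_nhds_unique h1 h2
    have hyN : -y ∈ N := by
      have hTy : T (-y) = 0 :=
        tendsto_nhds_unique ((T.continuous.tendsto _).comp hulim) hTu
      exact LinearMap.mem_ker.2 hTy
    have : -y = 0 := by
      have := hcompl.inf_eq_bot
      have hmem : -y ∈ N ⊓ M := ⟨hyN, hyM⟩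
      rwa [this, Submodule.mem_bot] at hmem
    rw [this, norm_zero] at hy1
    exact absurd hy1 (by norm_num)
  obtain ⟨c, hc, hbb⟩ := hbb
  -- the restriction of T to M
  set Tm : M →L[ℂ] X := T.comp M.subtypeL with hTm
  have hTmapp : ∀ m : M, Tm m = T (m : X) := fun m => rfl
  have hanti : AntilipschitzWith (⟨c, hc.le⟩ : NNReal)⁻¹ Tm := by
    apply Tm.antilipschitz_of_bound
    intro x
    change ‖x‖ ≤ c⁻¹ * ‖Tm x‖
    have h1 := hbb (x : X) x.2
    rw [← hTmapp] at h1
    have hnx : ‖x‖ = ‖(x : X)‖ := rfl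
    rw [hnx, ← div_eq_inv_mul, le_div_iff₀ hc]
    linarith
  -- the range of T is closed
  have hRanSet : (LinearMap.range (T : X →ₗ[ℂ] X) : Set X) = Set.range Tm := by
    ext z
    constructor
    · rintro ⟨x, rfl⟩
      have hx : x ∈ N ⊔ M := by rw [hcompl.sup_eq_top]; trivial
      obtain ⟨y, hy, m, hm, rfl⟩ := Submodule.mem_sup.1 hx
      refine ⟨⟨m, hm⟩, ?_⟩
      rw [hTmapp]
      have hy0 : T y = 0 := LinearMap.mem_ker.1 hy
      rw [map_add, ContinuousLinearMap.coe_coe, hy0, zero_add]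
    · rintro ⟨m, rfl⟩
      exact ⟨(m : X), rfl⟩
  have hRclosed : IsClosed ((LinearMap.range (T : X →ₗ[ℂ] X) : Submodule ℂ X) : Set X) := by
    rw [hRanSet]
    exact hanti.isClosed_range Tm.uniformContinuous
  set Ran : Submodule ℂ X := LinearMap.range (T : X →ₗ[ℂ] X) with hRan
  haveI hRC : IsClosed ((Ran : Submodule ℂ X) : Set X) := hRclosed
  -- the quotient X ⧸ Ran is finite dimensional
  have hmkcont : Continuous (Ran.mkQ) := by
    apply AddMonoidHomClass.continuous_of_bound Ran.mkQ 1
    intro x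
    rw [one_mul]
    exact Submodule.Quotient.norm_mk_le Ran x
  haveI hQfd : FiniteDimensional ℂ (X ⧸ Ran) := by
    apply FiniteDimensional.of_isCompact_closedBall₀ (𝕜 := ℂ) (r := 1/2) (by norm_num)
    have hsub : closedBall (0 : X ⧸ Ran) (1/2) ⊆ Ran.mkQ '' (Neg.neg '' C) := by
      intro y hy
      rw [mem_closedBall_zero_iff] at hy
      obtain ⟨x, hxy, hxn⟩ := Submodule.Quotient.norm_mk_lt y (ε := 1/2) (by norm_num)
      have hx1 : ‖x‖ < 1 := by linarith
      have hKx : K x ∈ C := hCim ⟨x, by simp [mem_closedBall_zero_iff]; linarith, rfl⟩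
      refine ⟨-(K x), ⟨K x, hKx, rfl⟩, ?_⟩
      have hTx : Ran.mkQ (T x) = 0 := by
        rw [Submodule.mkQ_apply, Submodule.Quotient.mk_eq_zero]
        exact ⟨x, rfl⟩
      have : Ran.mkQ x = y := hxy
      calc Ran.mkQ (-(K x)) = Ran.mkQ (x - T x) := by rw [hTapp]; congr 1; abel
        _ = Ran.mkQ x - Ran.mkQ (T x) := map_sub _ _ _
        _ = y := by rw [hTx, this, sub_zero]
    exact IsCompact.of_isClosed_subset
      (((hC.image continuous_neg).image hmkcont)) Metric.isClosed_closedBall hsub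
  -- Ran is complemented: get a bounded projection onto Ran
  obtain ⟨ρ, hρ⟩ : Ran.ClosedComplemented :=
    Submodule.ClosedComplemented.of_quotient_finiteDimensional hRclosed
  haveI : CompleteSpace Ran := hRclosed.completeSpace_coe
  -- T restricted to M is a continuous linear equivalence onto Ran
  set e : M →L[ℂ] Ran := Tm.codRestrict Ran (fun m => ⟨(m : X), rfl⟩) with he
  have heapp : ∀ m : M, ((e m : X)) = T (m : X) := fun m => rfl
  have hinj : LinearMap.ker (e : M →ₗ[ℂ] Ran) = ⊥ := by
    rw [LinearMap.ker_eq_bot']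
    intro m hm
    have h0 : T (m : X) = 0 := by
      have := congrArg (Subtype.val) hm
      simpa [heapp] using this
    have hmN : (m : X) ∈ N := LinearMap.mem_ker.2 h0
    have : (m : X) ∈ N ⊓ M := ⟨hmN, m.2⟩
    rw [hcompl.inf_eq_bot, Submodule.mem_bot] at this
    exact Subtype.ext this
  have hsurj : LinearMap.range (e : M →ₗ[ℂ] Ran) = ⊤ := by
    rw [LinearMap.range_eq_top]
    rintro ⟨z, hz⟩
    have : z ∈ Set.range Tm := by rw [← hRanSet]; exact hz
    obtain ⟨m, hm⟩ := this
    exact ⟨m, Subtype.ext hm⟩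
  set eq : M ≃L[ℂ] Ran := ContinuousLinearEquiv.ofBijective e hinj hsurj with heq
  set S : X →L[ℂ] X := M.subtypeL ∘L ((eq.symm : ↥Ran →L[ℂ] ↥M) ∘L ρ) with hS
  refine ⟨S, S ∘L (1 + K) - 1, ?_, by abel⟩
  -- the remainder has finite rank, since its range lies in the kernel N
  have hrange : LinearMap.range ((S ∘L (1 + K) - 1 : X →L[ℂ] X) : X →ₗ[ℂ] X) ≤ N := by
    rintro z ⟨x, rfl⟩
    have hx : x ∈ N ⊔ M := by rw [hcompl.sup_eq_top]; trivial
    obtain ⟨y, hy, m, hm, rfl⟩ := Submodule.mem_sup.1 hx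
    have hy0 : T y = 0 := LinearMap.mem_ker.1 hy
    have hTx : T (y + m) = T m := by rw [map_add, hy0, zero_add]
    have hTm' : (1 + K) (y + m) = Tm ⟨m, hm⟩ := by
      rw [← hT, hTx, hTmapp]
    have hρT : ρ (Tm ⟨m, hm⟩) = e ⟨m, hm⟩ := by
      have : (e ⟨m, hm⟩ : X) = Tm ⟨m, hm⟩ := rfl
      rw [← this]
      exact hρ (e ⟨m, hm⟩)
    have hsymm : eq.symm (e ⟨m, hm⟩) = ⟨m, hm⟩ :=
      ContinuousLinearEquiv.ofBijective_symm_apply_apply e hinj hsurj ⟨m, hm⟩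
    have hSx : S ((1 + K) (y + m)) = m := by
      rw [hTm', hS]
      simp only [ContinuousLinearMap.comp_apply]
      rw [hρT]
      have : (eq.symm : ↥Ran →L[ℂ] ↥M) (e ⟨m, hm⟩) = ⟨m, hm⟩ := hsymm
      rw [this, Submodule.subtypeL_apply]
    have : ((S ∘L (1 + K) - 1 : X →L[ℂ] X) : X →ₗ[ℂ] X) (y + m) = -y := by
      show (S ∘L (1 + K) - 1 : X →L[ℂ] X) (y + m) = -y
      rw [ContinuousLinearMap.sub_apply, ContinuousLinearMap.comp_apply,
        ContinuousLinearMap.one_apply, hSx]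
      abel
    rw [this]
    exact N.neg_mem hy
  exact Submodule.finiteDimensional_of_le hrange


end Aux

set_option maxHeartbeats 1000000 in


/-- Let `X` be a Banach space, `P` a bounded projection with `Q = I - P`, and `J` a
two-sided ideal of `B(X)` with finite-rank ⊆ `J` ⊆ compact.  If `A` is invertible (with
inverse `B`), `P A Q ∈ J`, and the compression `P A P` restricted to the range of `P` is
Fredholm on `PX` (expressed, via Atkinson's theorem, by the existence of a regularizer
`R = P R P` with `R (PAP) - P` and `(PAP) R - P` compact), then `P B Q ∈ J`. -/
theorem inverse_offdiagonal_in_ideal_of_fredholm (X : Type*) [NormedAddCommGroup X]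
    [NormedSpace ℂ X] [CompleteSpace X]
    (J : Set (X →L[ℂ] X))
    (hJfin : ∀ T : X →L[ℂ] X,
      FiniteDimensional ℂ (LinearMap.range (T : X →ₗ[ℂ] X)) → T ∈ J)
    (hJcpt : ∀ T ∈ J, IsCompactOperator T)
    (hJadd : ∀ S ∈ J, ∀ T ∈ J, S + T ∈ J)
    (hJideal : ∀ (S : X →L[ℂ] X), ∀ T ∈ J, S ∘L T ∈ J ∧ T ∘L S ∈ J)
    (P : X →L[ℂ] X) (hP : P ∘L P = P) (Q : X →L[ℂ] X) (hQ : Q = 1 - P)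
    (A : X →L[ℂ] X) (B : X →L[ℂ] X) (hAB : A ∘L B = 1) (hBA : B ∘L A = 1)
    (hPAQ : P ∘L A ∘L Q ∈ J)
    (R : X →L[ℂ] X) (hR : R = P ∘L R ∘L P)
    (hreg₁ : IsCompactOperator (R ∘L (P ∘L A ∘L P) - P))
    (hreg₂ : IsCompactOperator ((P ∘L A ∘L P) ∘L R - P)) :
    P ∘L B ∘L Q ∈ J := by
  subst hQ
  have hP' : P * P = P := hP
  have hAB' : A * B = 1 := hAB
  obtain ⟨S, F, hF, hSF⟩ := exists_parametrix (R ∘L (P ∘L A ∘L P) - P) hreg₁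
  have hSF' : S * (1 + (R * ((P * A) * P) - P)) = 1 + F := hSF
  have hPAW : (P * A) * (B * (1 - P)) = 0 := by
    rw [mul_assoc P A (B * (1 - P)), ← mul_assoc A B (1 - P), hAB', one_mul,
      mul_sub, mul_one, hP', sub_self]
  have h2 : ((P * A) * P) * (P * (B * (1 - P))) =
      -(((P * A) * (1 - P)) * (B * (1 - P))) := by
    have hL : ((P * A) * P) * (P * (B * (1 - P))) = (P * A) * (P * (B * (1 - P))) := by
      rw [mul_assoc (P * A) P (P * (B * (1 - P))), ← mul_assoc P P (B * (1 - P)), hP']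
    have hRR : ((P * A) * (1 - P)) * (B * (1 - P)) =
        (P * A) * (B * (1 - P)) - (P * A) * (P * (B * (1 - P))) := by
      rw [mul_assoc (P * A) (1 - P) (B * (1 - P)), sub_mul, one_mul, mul_sub]
    rw [hL, hRR, hPAW, zero_sub, neg_neg]
  have h1 : (1 + (R * ((P * A) * P) - P)) * (P * (B * (1 - P))) =
      R * (((P * A) * P) * (P * (B * (1 - P)))) := by
    rw [add_mul, one_mul, sub_mul, ← mul_assoc P P (B * (1 - P)), hP',
      mul_assoc R ((P * A) * P) (P * (B * (1 - P)))]
    abel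
  have mem1 : ((P * A) * (1 - P)) * (B * (1 - P)) ∈ J :=
    (hJideal (B * (1 - P)) _ hPAQ).2
  have mem2 : -(((P * A) * (1 - P)) * (B * (1 - P))) ∈ J := by
    have hneg : ((-1 : X →L[ℂ] X)) ∘L (((P * A) * (1 - P)) * (B * (1 - P))) =
        -(((P * A) * (1 - P)) * (B * (1 - P))) := neg_one_mul _
    rw [← hneg]
    exact (hJideal _ _ mem1).1
  have mem3 : ((P * A) * P) * (P * (B * (1 - P))) ∈ J := by rw [h2]; exact mem2
  have mem4 : (1 + (R * ((P * A) * P) - P)) * (P * (B * (1 - P))) ∈ J := by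
    rw [h1]; exact (hJideal R _ mem3).1
  have mem5 : (1 + F) * (P * (B * (1 - P))) ∈ J := by
    have hcomp : (1 + F) * (P * (B * (1 - P))) =
        S * ((1 + (R * ((P * A) * P) - P)) * (P * (B * (1 - P)))) := by
      rw [← mul_assoc S (1 + (R * ((P * A) * P) - P)) (P * (B * (1 - P))), hSF']
    rw [hcomp]; exact (hJideal S _ mem4).1
  have mem6 : P * (B * (1 - P)) + F * (P * (B * (1 - P))) ∈ J := by
    rwa [add_mul, one_mul] at mem5
  haveI := hF
  have hle : LinearMap.range ((-(F * (P * (B * (1 - P)))) : X →L[ℂ] X) : X →ₗ[ℂ] X) ≤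
      LinearMap.range (F : X →ₗ[ℂ] X) := by
    rintro z ⟨x, rfl⟩
    refine ⟨-((P * (B * (1 - P))) x), ?_⟩
    show F (-((P * (B * (1 - P))) x)) = (-(F * (P * (B * (1 - P)))) : X →L[ℂ] X) x
    rw [map_neg]
    rfl
  have mem7 : -(F * (P * (B * (1 - P)))) ∈ J :=
    hJfin _ (Submodule.finiteDimensional_of_le hle)
  have mem8 := hJadd _ mem6 _ mem7
  have hfin : P * (B * (1 - P)) + F * (P * (B * (1 - P))) +
      -(F * (P * (B * (1 - P)))) = P * (B * (1 - P)) := by abel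
  rw [hfin] at mem8
  exact mem8
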